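/- arXiv:math/0702233 — 2 statements merged into one kernel-verified Lean document; each statement's English description precedes it below -/
import Mathlib

section
/- Let 1 ≤ p < ∞ and β > 0. If there exists a constant C > 0 such that for every n ≥ 1 and every function f : Ω_n → ℂ one has ‖ |∇f| ‖_p ≤ C ‖Δ^β f‖_p, then β ≥ 1/p. -/
open Real Finset

namespace DiscreteCube

variable {n : ℕ}

/-- The point of the cube `{-1,1}^n` encoded by `x : Fin n → Bool`:
coordinate `j` is `1` if `x j = true` and `-1` otherwise. -/
def sgn (b : Bool) : ℂ := if b then 1 else -1

/-- Negate the `j`-th coordinate. -/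
def flip (j : Fin n) (x : Fin n → Bool) : Fin n → Bool :=
  Function.update x j (!(x j))

/-- Discrete partial derivative `(∂_j f)(x) = f(x) - f(x e_j)`. -/
def pd (j : Fin n) (f : (Fin n → Bool) → ℂ) (x : Fin n → Bool) : ℂ :=
  f x - f (flip j x)

/-- Length of the discrete gradient, `|∇f|(x) = (Σ_j |(∂_j f)(x)|²)^{1/2}`. -/
noncomputable def gradLen (f : (Fin n → Bool) → ℂ) (x : Fin n → Bool) : ℝ :=
  Real.sqrt (∑ j : Fin n, ‖pd j f x‖ ^ 2)

/-- Expectation with respect to the uniform probability on the cube. -/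
noncomputable def expect (f : (Fin n → Bool) → ℂ) : ℂ :=
  (∑ x : Fin n → Bool, f x) / 2 ^ n

/-- `L^p` norm (`1 ≤ p < ∞`) of a complex-valued function on the cube. -/
noncomputable def cLp (p : ℝ) (f : (Fin n → Bool) → ℂ) : ℝ :=
  ((∑ x : Fin n → Bool, ‖f x‖ ^ p) / 2 ^ n) ^ (1 / p)

/-- `L^p` norm (`1 ≤ p < ∞`) of a real-valued function on the cube. -/
noncomputable def rLp (p : ℝ) (g : (Fin n → Bool) → ℝ) : ℝ :=
  ((∑ x : Fin n → Bool, |g x| ^ p) / 2 ^ n) ^ (1 / p)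

end DiscreteCube

namespace DiscreteCube

variable {n : ℕ}

/-- Walsh function `ω_A(x) = ∏_{j∈A} x_j`. -/
def walsh (A : Finset (Fin n)) (x : Fin n → Bool) : ℂ := ∏ j ∈ A, sgn (x j)

/-- Walsh–Fourier coefficient `f̂(A) = 𝔼[f·ω_A]`. -/
noncomputable def coeff (f : (Fin n → Bool) → ℂ) (A : Finset (Fin n)) : ℂ :=
  (∑ x : Fin n → Bool, f x * walsh A x) / 2 ^ n

/-- The operator `cos^{Δ/4}θ`:
`cos^{Δ/4}θ(f) = Σ_A cos^{|A|}θ · f̂(A) ω_A` (the `A = ∅` term is `f̂(∅)`). -/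
noncomputable def cosD (θ : ℝ) (f : (Fin n → Bool) → ℂ) (x : Fin n → Bool) : ℂ :=
  ∑ A : Finset (Fin n), (Real.cos θ : ℂ) ^ A.card * coeff f A * walsh A x

/-- Fractional power of the discrete Laplacian, `Δ^β f = Σ_{A≠∅} (4|A|)^β f̂(A) ω_A`
(for `β > 0` the `A = ∅` term vanishes since `0^β = 0`). -/
noncomputable def deltaPow (β : ℝ) (f : (Fin n → Bool) → ℂ) (x : Fin n → Bool) : ℂ :=
  ∑ A : Finset (Fin n), (((4 * (A.card : ℝ)) ^ β : ℝ) : ℂ) * coeff f A * walsh A x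

/-- The constant `K_α = (1/Γ(1−α)) ∫_0^{π/2} (−log cos θ)^{−α} dθ`. -/
noncomputable def Kconst (α : ℝ) : ℝ :=
  (1 / Real.Gamma (1 - α)) * ∫ θ in (0:ℝ)..(Real.pi / 2), (-Real.log (Real.cos θ)) ^ (-α)

/-- The constant `k_β = (1/Γ(β)) ∫_0^{π/2} (−log cos θ)^{β−1} dθ`. -/
noncomputable def kconst (β : ℝ) : ℝ :=
  (1 / Real.Gamma β) * ∫ θ in (0:ℝ)..(Real.pi / 2), (-Real.log (Real.cos θ)) ^ (β - 1)

end DiscreteCube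

open MeasureTheory Set

namespace NSaux

variable {n : ℕ}

def eps (b : Bool) : ℝ := if b then 1 else -1

def eA (A : Finset (Fin n)) (x : Fin n → Bool) : ℝ := ∏ j ∈ A, eps (x j)

lemma abs_eps (b : Bool) : |eps b| = 1 := by cases b <;> simp [eps]

lemma abs_eA (A : Finset (Fin n)) (x : Fin n → Bool) : |eA A x| = 1 := by
  rw [eA, Finset.abs_prod]
  simp [abs_eps]

lemma prod_formula (c : ℝ) (x : Fin n → Bool) :
    ∑ A : Finset (Fin n), c ^ A.card * eA A x = ∏ j, (1 + c * eps (x j)) := by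
  have := Finset.prod_add (fun j => c * eps (x j)) (fun _ => (1:ℝ)) (univ : Finset (Fin n))
  simp only [Finset.prod_const_one, mul_one] at this
  rw [show (∏ j, (1 + c * eps (x j))) = ∏ j, (c * eps (x j) + 1) by
    exact Finset.prod_congr rfl fun j _ => by ring, this, ← Finset.powerset_univ]
  apply Finset.sum_congr rfl
  intro A _
  rw [eA, Finset.prod_mul_distrib, Finset.prod_const]

lemma sum_prod_bool (g : Fin n → Bool → ℝ) :
    ∑ x : Fin n → Bool, ∏ j, g j (x j) = ∏ j, (g j true + g j false) := by
  rw [← Fintype.piFinset_univ, ← Finset.prod_univ_sum]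
  apply Finset.prod_congr rfl
  intro j _
  simp

end NSaux

namespace NSaux

variable {n : ℕ}

def x0 : Fin n → Bool := fun _ => true

noncomputable def Kk (r : ℝ) (x : Fin n → Bool) : ℝ :=
  ((2:ℝ)^n)⁻¹ * ∏ j, (1 + r * eps (x j))

lemma Kk_eq_sum (r : ℝ) (x : Fin n → Bool) :
    Kk r x = ((2:ℝ)^n)⁻¹ * ∑ A : Finset (Fin n), r ^ A.card * eA A x := by
  rw [Kk, prod_formula]

lemma Kk_nonneg {r : ℝ} (hr0 : 0 ≤ r) (hr1 : r ≤ 1) (x : Fin n → Bool) : 0 ≤ Kk r x := by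
  apply mul_nonneg (by positivity)
  apply Finset.prod_nonneg
  intro j _
  cases hxj : x j <;> simp [eps] <;> nlinarith

lemma sum_Kk (r : ℝ) : ∑ x : Fin n → Bool, Kk r x = 1 := by
  simp only [Kk, ← Finset.mul_sum]
  rw [sum_prod_bool (fun j b => 1 + r * eps b)]
  simp [eps]
  have : 1 + r + (1 + -r) = 2 := by ring
  rw [this]
  simp

lemma Kk_x0 (r : ℝ) : Kk r (x0 : Fin n → Bool) = ((1+r)/2)^n := by
  simp [Kk, x0, eps, div_pow]
  rw [inv_mul_eq_div]

lemma Kk_one (x : Fin n → Bool) : Kk 1 x = if x = x0 then 1 else 0 := by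
  by_cases hx : x = x0
  · simp [hx, Kk_x0]
  · rw [Kk]
    have : ∃ j, x j = false := by
      by_contra hc
      push_neg at hc
      exact hx (funext fun j => by simpa [x0] using hc j)
    obtain ⟨j, hj⟩ := this
    rw [Finset.prod_eq_zero (Finset.mem_univ j) (by simp [hj, eps])]
    simp [hx]

/-- The subordinated "heat difference" function. -/
noncomputable def H (β : ℝ) (x : Fin n → Bool) (t : ℝ) : ℝ :=
  ∑ A : Finset (Fin n), ((2:ℝ)^n)⁻¹ * eA A x * (1 - Real.exp (-(4 * (A.card:ℝ) * t)))

lemma H_eq (β t : ℝ) (x : Fin n → Bool) :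
    H β x t = Kk 1 x - Kk (Real.exp (-(4*t))) x := by
  rw [H, Kk_eq_sum, Kk_eq_sum, ← mul_sub, ← Finset.sum_sub_distrib]
  rw [Finset.mul_sum]
  apply Finset.sum_congr rfl
  intro A _
  have : Real.exp (-(4 * (A.card:ℝ) * t)) = Real.exp (-(4*t)) ^ A.card := by
    rw [← Real.exp_nat_mul]
    ring_nf
  rw [this]
  ring

lemma sum_abs_H {β t : ℝ} (ht : 0 ≤ t) :
    ∑ x : Fin n → Bool, |H β x t| ≤ min 2 (4*n*t) := by
  set r : ℝ := Real.exp (-(4*t)) with hr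
  have hr0 : 0 < r := Real.exp_pos _
  have hr1 : r ≤ 1 := Real.exp_le_one_iff.mpr (by linarith)
  set q : ℝ := (1+r)/2 with hq
  have hq0 : 0 ≤ q := by positivity
  have hq1 : q ≤ 1 := by rw [hq]; linarith
  have hqn1 : q^n ≤ 1 := pow_le_one₀ hq0 hq1
  have key : ∑ x : Fin n → Bool, |H β x t| = 2*(1 - q^n) := by
    simp_rw [H_eq, Kk_one]
    rw [Finset.sum_eq_sum_sdiff_singleton_add (Finset.mem_univ (x0 : Fin n → Bool))]
    have h1 : ∀ x ∈ (univ : Finset (Fin n → Bool)) \ {x0},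
        |(if x = x0 then (1:ℝ) else 0) - Kk r x| = Kk r x := by
      intro x hx
      rw [Finset.mem_sdiff, Finset.mem_singleton] at hx
      rw [if_neg hx.2, zero_sub, abs_neg, abs_of_nonneg (Kk_nonneg hr0.le hr1 x)]
    rw [Finset.sum_congr rfl h1]
    have h2 : ∑ x ∈ (univ : Finset (Fin n → Bool)) \ {x0}, Kk r x = 1 - q^n := by
      have := sum_Kk (n := n) r
      rw [Finset.sum_eq_sum_sdiff_singleton_add (Finset.mem_univ (x0 : Fin n → Bool))] at this
      rw [Kk_x0] at this
      linarith
    rw [h2, if_pos rfl, Kk_x0, abs_of_nonneg (by linarith)]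
    ring
  rw [key, le_min_iff]
  constructor
  · nlinarith [pow_nonneg hq0 n]
  · have bern : 1 + (n:ℝ)*(q-1) ≤ q^n := by
      have := one_add_mul_le_pow (a := q - 1) (by linarith) n
      simpa using this
    have hrt : 1 - r ≤ 4*t := by
      have := Real.add_one_le_exp (-(4*t))
      linarith
    have h1q : 1 - q = (1-r)/2 := by rw [hq]; ring
    have : 1 - q^n ≤ (n:ℝ)*(1-q) := by linarith
    have : 1 - q^n ≤ (n:ℝ)*(2*t) := by
      have : (n:ℝ)*(1-q) ≤ (n:ℝ)*(2*t) := by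
        apply mul_le_mul_of_nonneg_left _ (Nat.cast_nonneg n)
        linarith
      linarith
    linarith

lemma abs_H_le {β t : ℝ} (ht : 0 ≤ t) (x : Fin n → Bool) : |H β x t| ≤ 1 := by
  rw [H_eq]
  set r : ℝ := Real.exp (-(4*t)) with hr
  have hr0 : 0 < r := Real.exp_pos _
  have hr1 : r ≤ 1 := Real.exp_le_one_iff.mpr (by linarith)
  have h1 := Kk_nonneg hr0.le hr1 x
  have h2 : Kk r x ≤ 1 := by
    have h3 := sum_Kk (n := n) r
    have := Finset.single_le_sum (f := fun y => Kk r y)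
      (fun y _ => Kk_nonneg hr0.le hr1 y) (Finset.mem_univ x)
    linarith
  rw [Kk_one, abs_le]
  have h2' : Kk r (x0 : Fin n → Bool) ≤ 1 := by
    have h3 := sum_Kk (n := n) r
    have := Finset.single_le_sum (f := fun y => Kk r y)
      (fun y _ => Kk_nonneg hr0.le hr1 y) (Finset.mem_univ (x0 : Fin n → Bool))
    linarith
  have h1' : 0 ≤ Kk r (x0 : Fin n → Bool) := Kk_nonneg hr0.le hr1 _
  refine ⟨?_, ?_⟩ <;> by_cases hx : x = x0 <;> simp [hx] <;> linarith

end NSaux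

namespace NSaux

/-- base integrand -/
noncomputable def bf (β lam t : ℝ) : ℝ := t^(-β-1) * (1 - Real.exp (-(lam * t)))

lemma bf_meas (β lam : ℝ) : Measurable (bf β lam) := by
  unfold bf
  fun_prop

lemma bf_nonneg {β lam : ℝ} (hlam : 0 ≤ lam) {t : ℝ} (ht : 0 < t) : 0 ≤ bf β lam t := by
  apply mul_nonneg (Real.rpow_nonneg ht.le _)
  have : Real.exp (-(lam*t)) ≤ 1 := Real.exp_le_one_iff.mpr (by nlinarith)
  linarith

lemma integrableOn_bf {β : ℝ} (hβ0 : 0 < β) (hβ1 : β < 1) {lam : ℝ} (hlam : 0 ≤ lam) :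
    IntegrableOn (bf β lam) (Set.Ioi 0) := by
  have h1 : IntegrableOn (bf β lam) (Set.Ioc 0 1) := by
    have hg : IntegrableOn (fun t : ℝ => lam * t^(-β)) (Set.Ioc 0 1) := by
      apply Integrable.const_mul
      exact (intervalIntegrable_iff_integrableOn_Ioc_of_le zero_le_one).mp
        (intervalIntegral.intervalIntegrable_rpow' (by linarith))
    apply Integrable.mono hg (bf_meas β lam).aestronglyMeasurable
    rw [ae_restrict_iff' measurableSet_Ioc]
    filter_upwards with t ht
    obtain ⟨ht0, ht1⟩ := ht
    rw [Real.norm_eq_abs, Real.norm_eq_abs, abs_of_nonneg (bf_nonneg hlam ht0)]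
    have hexp : 1 - Real.exp (-(lam*t)) ≤ lam * t := by
      have := Real.add_one_le_exp (-(lam*t))
      linarith
    have hrp : (0:ℝ) ≤ t^(-β-1) := Real.rpow_nonneg ht0.le _
    have key : bf β lam t ≤ lam * t^(-β) := by
      rw [bf]
      calc t^(-β-1) * (1 - Real.exp (-(lam*t))) ≤ t^(-β-1) * (lam * t) := by
            apply mul_le_mul_of_nonneg_left hexp hrp
        _ = lam * t^(-β) := by
            have hsplit : t ^ (-β-1) * t = t ^ (-β) := by
              have h := Real.rpow_add ht0 (-β-1) 1
              rw [Real.rpow_one] at h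
              rw [← h]; norm_num
            rw [← hsplit]; ring
    calc bf β lam t ≤ lam * t^(-β) := key
      _ ≤ |lam * t^(-β)| := le_abs_self _
  have h2 : IntegrableOn (bf β lam) (Set.Ioi 1) := by
    have hg : IntegrableOn (fun t : ℝ => t^(-β-1)) (Set.Ioi 1) :=
      integrableOn_Ioi_rpow_of_lt (by linarith) zero_lt_one
    apply Integrable.mono hg (bf_meas β lam).aestronglyMeasurable
    rw [ae_restrict_iff' measurableSet_Ioi]
    filter_upwards with t ht
    rw [Set.mem_Ioi] at ht
    have ht0 : (0:ℝ) < t := lt_trans zero_lt_one ht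
    rw [Real.norm_eq_abs, Real.norm_eq_abs, abs_of_nonneg (bf_nonneg hlam ht0),
      abs_of_nonneg (Real.rpow_nonneg ht0.le _)]
    rw [bf]
    have hge := Real.exp_nonneg (-(lam*t))
    nlinarith [Real.rpow_nonneg ht0.le (-β-1)]
  have := h1.union h2
  rwa [Set.Ioc_union_Ioi_eq_Ioi zero_le_one] at this

/-- the normalizing constant -/
noncomputable def I1 (β : ℝ) : ℝ := ∫ t in Set.Ioi (0:ℝ), bf β 1 t

lemma I1_pos {β : ℝ} (hβ0 : 0 < β) (hβ1 : β < 1) : 0 < I1 β := by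
  rw [I1, setIntegral_pos_iff_support_of_nonneg_ae]
  · have hsub : Set.Ioi (0:ℝ) ⊆ Function.support (bf β 1) ∩ Set.Ioi 0 := by
      intro t ht
      rw [Set.mem_Ioi] at ht
      refine ⟨?_, ht⟩
      rw [Function.mem_support, bf]
      have h1 : (0:ℝ) < t^(-β-1) := Real.rpow_pos_of_pos ht _
      have h2 : Real.exp (-(1*t)) < 1 := by
        rw [Real.exp_lt_one_iff]; linarith
      exact ne_of_gt (by nlinarith)
    have := measure_mono (μ := MeasureTheory.volume) hsub
    have hvol : (volume (Set.Ioi (0:ℝ))) = ⊤ := by simp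
    rw [hvol] at this
    have h0t : (0:ENNReal) < ⊤ := by norm_num
    exact lt_of_lt_of_le h0t this
  · filter_upwards [self_mem_ae_restrict measurableSet_Ioi] with t ht
    simpa using bf_nonneg zero_le_one ht
  · exact integrableOn_bf hβ0 hβ1 zero_le_one

lemma integral_bf {β : ℝ} (hβ0 : 0 < β) (hβ1 : β < 1) {lam : ℝ} (hlam : 0 ≤ lam) :
    ∫ t in Set.Ioi (0:ℝ), bf β lam t = lam ^ β * I1 β := by
  rcases eq_or_lt_of_le hlam with h0 | hpos
  · rw [← h0]
    simp [bf, Real.zero_rpow hβ0.ne']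
  · have hcomp := MeasureTheory.integral_comp_mul_left_Ioi (g := bf β 1) 0 hpos
    rw [mul_zero] at hcomp
    have heq : ∀ t ∈ Set.Ioi (0:ℝ), bf β lam t = lam^(β+1) * bf β 1 (lam * t) := by
      intro t ht
      rw [Set.mem_Ioi] at ht
      rw [bf, bf, one_mul, Real.mul_rpow hpos.le ht.le]
      have : lam^(β+1) * lam^(-β-1) = 1 := by
        rw [← Real.rpow_add hpos]
        norm_num
      linear_combination (-(t ^ (-β - 1)) * (1 - Real.exp (-(lam * t)))) * this
    rw [setIntegral_congr_fun measurableSet_Ioi heq, MeasureTheory.integral_const_mul, hcomp]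
    rw [smul_eq_mul, I1]
    rw [← mul_assoc]
    congr 1
    rw [← Real.rpow_neg_one lam, ← Real.rpow_add hpos]
    norm_num

end NSaux

namespace NSaux

/-- The real-valued kernel of `Δ^β δ_{x0}`. -/
noncomputable def G (β : ℝ) {n : ℕ} (x : Fin n → Bool) : ℝ :=
  ∑ A : Finset (Fin n), (4*(A.card:ℝ))^β * ((2:ℝ)^n)⁻¹ * eA A x

lemma fx_rep (β : ℝ) {n : ℕ} (x : Fin n → Bool) :
    (fun t : ℝ => t^(-β-1) * H β x t)
      = fun t => ∑ A : Finset (Fin n), (((2:ℝ)^n)⁻¹ * eA A x) * bf β (4*(A.card:ℝ)) t := by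
  funext t
  simp only [H, bf]
  rw [Finset.mul_sum]
  exact Finset.sum_congr rfl fun A _ => by ring

lemma integrable_fx {β : ℝ} (hβ0 : 0 < β) (hβ1 : β < 1) {n : ℕ} (x : Fin n → Bool) :
    IntegrableOn (fun t : ℝ => t^(-β-1) * H β x t) (Set.Ioi 0) := by
  rw [fx_rep]
  exact integrable_finset_sum _ (fun A _ =>
    (integrableOn_bf hβ0 hβ1 (by positivity)).const_mul _)

lemma G_eq {β : ℝ} (hβ0 : 0 < β) (hβ1 : β < 1) {n : ℕ} (x : Fin n → Bool) :
    G β x = (I1 β)⁻¹ * ∫ t in Set.Ioi (0:ℝ), t^(-β-1) * H β x t := by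
  have hI : ∫ t in Set.Ioi (0:ℝ), t^(-β-1) * H β x t = I1 β * G β x := by
    rw [fx_rep]
    rw [integral_finset_sum _ (fun A _ =>
      (integrableOn_bf hβ0 hβ1 (by positivity)).const_mul _)]
    have : ∀ A : Finset (Fin n),
        ∫ t in Set.Ioi (0:ℝ), (((2:ℝ)^n)⁻¹ * eA A x) * bf β (4*(A.card:ℝ)) t
          = (((2:ℝ)^n)⁻¹ * eA A x) * ((4*(A.card:ℝ))^β * I1 β) := by
      intro A
      rw [MeasureTheory.integral_const_mul, integral_bf hβ0 hβ1 (by positivity)]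
    rw [Finset.sum_congr rfl (fun A _ => this A), G, Finset.mul_sum]
    apply Finset.sum_congr rfl
    intro A _
    ring
  rw [hI, ← mul_assoc, inv_mul_cancel₀ (I1_pos hβ0 hβ1).ne', one_mul]

lemma abs_G_le {β : ℝ} (hβ0 : 0 < β) {n : ℕ} (x : Fin n → Bool) :
    |G β x| ≤ (4*(n:ℝ))^β := by
  calc |G β x| ≤ ∑ A : Finset (Fin n), |(4*(A.card:ℝ))^β * ((2:ℝ)^n)⁻¹ * eA A x| :=
        Finset.abs_sum_le_sum_abs _ _
    _ ≤ ∑ A : Finset (Fin n), (4*(n:ℝ))^β * ((2:ℝ)^n)⁻¹ := by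
        apply Finset.sum_le_sum
        intro A _
        rw [abs_mul, abs_eA, mul_one, abs_mul]
        have h1 : |(4*(A.card:ℝ))^β| = (4*(A.card:ℝ))^β :=
          abs_of_nonneg (Real.rpow_nonneg (by positivity) _)
        have h2 : |((2:ℝ)^n)⁻¹| = ((2:ℝ)^n)⁻¹ := abs_of_nonneg (by positivity)
        rw [h1, h2]
        apply mul_le_mul_of_nonneg_right _ (by positivity)
        apply Real.rpow_le_rpow (by positivity) _ hβ0.le
        have : A.card ≤ n := by
          simpa using Finset.card_le_card (Finset.subset_univ A)
        have : (A.card:ℝ) ≤ (n:ℝ) := by exact_mod_cast this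
        linarith
    _ = (4*(n:ℝ))^β := by
        rw [Finset.sum_const, Finset.card_univ]
        have : Fintype.card (Finset (Fin n)) = 2^n := by simp
        rw [this]
        push_cast
        rw [nsmul_eq_mul]
        push_cast
        field_simp

lemma sum_abs_G_le {β : ℝ} (hβ0 : 0 < β) (hβ1 : β < 1) {n : ℕ} (hn : 1 ≤ n) :
    ∑ x : Fin n → Bool, |G β x| ≤ (I1 β)⁻¹ * ((4/(1-β) + 2/β) * (n:ℝ)^β) := by
  have hn0 : (0:ℝ) < (n:ℝ) := by exact_mod_cast hn
  set a : ℝ := (n:ℝ)⁻¹ with ha_def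
  have ha : 0 < a := by positivity
  set Φ : ℝ → ℝ := fun t => ∑ x : Fin n → Bool, |t^(-β-1) * H β x t| with hΦ
  have hΦint : IntegrableOn Φ (Set.Ioi 0) :=
    integrable_finset_sum _ (fun x _ => (integrable_fx hβ0 hβ1 x).abs)
  -- step 1
  have step1 : ∑ x : Fin n → Bool, |G β x| ≤ (I1 β)⁻¹ * ∫ t in Set.Ioi (0:ℝ), Φ t := by
    have hIinv : (0:ℝ) ≤ (I1 β)⁻¹ := inv_nonneg.mpr (I1_pos hβ0 hβ1).le
    calc ∑ x : Fin n → Bool, |G β x|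
        ≤ ∑ x : Fin n → Bool, (I1 β)⁻¹ * ∫ t in Set.Ioi (0:ℝ), |t^(-β-1) * H β x t| := by
          apply Finset.sum_le_sum
          intro x _
          rw [G_eq hβ0 hβ1 x, abs_mul, abs_of_nonneg hIinv]
          apply mul_le_mul_of_nonneg_left _ hIinv
          calc |∫ t in Set.Ioi (0:ℝ), t^(-β-1) * H β x t|
              = ‖∫ t in Set.Ioi (0:ℝ), t^(-β-1) * H β x t‖ := (Real.norm_eq_abs _).symm
            _ ≤ ∫ t in Set.Ioi (0:ℝ), ‖t^(-β-1) * H β x t‖ :=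
                MeasureTheory.norm_integral_le_integral_norm _
            _ = ∫ t in Set.Ioi (0:ℝ), |t^(-β-1) * H β x t| := by
                simp [Real.norm_eq_abs, abs_mul]
      _ = (I1 β)⁻¹ * ∫ t in Set.Ioi (0:ℝ), Φ t := by
          rw [← Finset.mul_sum]
          congr 1
          rw [← integral_finset_sum _ (fun x _ => (integrable_fx hβ0 hβ1 x).abs)]
  -- pointwise bounds on Φ
  have hΦbound : ∀ t : ℝ, 0 < t → Φ t = t^(-β-1) * ∑ x : Fin n → Bool, |H β x t| := by
    intro t ht
    rw [hΦ, Finset.mul_sum]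
    apply Finset.sum_congr rfl
    intro x _
    rw [abs_mul, abs_of_nonneg (Real.rpow_nonneg ht.le _)]
  -- split the integral
  have hsplit : ∫ t in Set.Ioi (0:ℝ), Φ t
      = (∫ t in Set.Ioc (0:ℝ) a, Φ t) + ∫ t in Set.Ioi a, Φ t := by
    rw [← Set.Ioc_union_Ioi_eq_Ioi ha.le]
    rw [MeasureTheory.setIntegral_union (Set.Ioc_disjoint_Ioi le_rfl) measurableSet_Ioi
      (hΦint.mono_set Set.Ioc_subset_Ioi_self)
      (hΦint.mono_set (Set.Ioi_subset_Ioi ha.le))]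
  -- first piece
  have bound1 : ∫ t in Set.Ioc (0:ℝ) a, Φ t ≤ (4/(1-β)) * (n:ℝ)^β := by
    have hg1 : IntegrableOn (fun t : ℝ => (4*(n:ℝ)) * t^(-β)) (Set.Ioc 0 a) :=
      (((intervalIntegrable_iff_integrableOn_Ioc_of_le ha.le).mp
        (intervalIntegral.intervalIntegrable_rpow' (by linarith)))).const_mul _
    have hmono : ∫ t in Set.Ioc (0:ℝ) a, Φ t
        ≤ ∫ t in Set.Ioc (0:ℝ) a, (4*(n:ℝ)) * t^(-β) := by
      apply MeasureTheory.setIntegral_mono_on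
        (hΦint.mono_set Set.Ioc_subset_Ioi_self) hg1 measurableSet_Ioc
      intro t ht
      obtain ⟨ht0, hta⟩ := ht
      rw [hΦbound t ht0]
      have hs := (sum_abs_H (β := β) (n := n) ht0.le).trans
        (min_le_right 2 (4*(n:ℝ)*t))
      calc t^(-β-1) * ∑ x : Fin n → Bool, |H β x t|
          ≤ t^(-β-1) * (4*(n:ℝ)*t) :=
            mul_le_mul_of_nonneg_left hs (Real.rpow_nonneg ht0.le _)
        _ = (4*(n:ℝ)) * t^(-β) := by
            have h := Real.rpow_add ht0 (-β-1) 1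
            rw [Real.rpow_one] at h
            rw [show (-β-1) + 1 = -β by ring] at h
            rw [h]
            ring
    have hval : ∫ t in Set.Ioc (0:ℝ) a, (4*(n:ℝ)) * t^(-β)
        = (4*(n:ℝ)) * (a^(1-β)/(1-β)) := by
      rw [MeasureTheory.integral_const_mul]
      congr 1
      rw [← intervalIntegral.integral_of_le ha.le,
        integral_rpow (Or.inl (by linarith))]
      rw [Real.zero_rpow (by intro hc; rw [show -β+1 = 1-β by ring] at hc; linarith)]
      rw [show -β+1 = 1-β by ring]
      ring
    have hfin : (4*(n:ℝ)) * (a^(1-β)/(1-β)) = (4/(1-β)) * (n:ℝ)^β := by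
      rw [ha_def, Real.inv_rpow hn0.le]
      have hx : (n:ℝ) * ((n:ℝ)^(1-β))⁻¹ = (n:ℝ)^β := by
        have hne : ((n:ℝ)^(1-β)) ≠ 0 := (Real.rpow_pos_of_pos hn0 _).ne'
        have hadd : (n:ℝ)^β * (n:ℝ)^(1-β) = (n:ℝ) := by
          rw [← Real.rpow_add hn0]
          norm_num
        field_simp
        linarith [hadd]
      calc (4*(n:ℝ)) * (((n:ℝ)^(1-β))⁻¹/(1-β)) = 4*((n:ℝ) * ((n:ℝ)^(1-β))⁻¹)/(1-β) := by
            ring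
        _ = (4/(1-β)) * (n:ℝ)^β := by rw [hx]; ring
    rw [hval] at hmono
    rw [← hfin]
    exact hmono
  -- second piece
  have bound2 : ∫ t in Set.Ioi a, Φ t ≤ (2/β) * (n:ℝ)^β := by
    have hg2 : IntegrableOn (fun t : ℝ => (2:ℝ) * t^(-β-1)) (Set.Ioi a) :=
      (integrableOn_Ioi_rpow_of_lt (by linarith) ha).const_mul 2
    have hmono : ∫ t in Set.Ioi a, Φ t ≤ ∫ t in Set.Ioi a, (2:ℝ) * t^(-β-1) := by
      apply MeasureTheory.setIntegral_mono_on
        (hΦint.mono_set (Set.Ioi_subset_Ioi ha.le)) hg2 measurableSet_Ioi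
      intro t ht
      rw [Set.mem_Ioi] at ht
      have ht0 : 0 < t := ha.trans ht
      rw [hΦbound t ht0]
      have hs := (sum_abs_H (β := β) (n := n) ht0.le).trans (min_le_left _ _)
      calc t^(-β-1) * ∑ x : Fin n → Bool, |H β x t|
          ≤ t^(-β-1) * 2 := mul_le_mul_of_nonneg_left hs (Real.rpow_nonneg ht0.le _)
        _ = 2 * t^(-β-1) := by ring
    have hval : ∫ t in Set.Ioi a, (2:ℝ) * t^(-β-1) = 2 * (-a^(-β)/(-β)) := by
      rw [MeasureTheory.integral_const_mul, integral_Ioi_rpow_of_lt (by linarith) ha]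
      rw [show (-β-1)+1 = -β by ring]
    have hfin2 : 2 * (-a^(-β)/(-β)) = (2/β) * (n:ℝ)^β := by
      rw [ha_def, Real.inv_rpow hn0.le, Real.rpow_neg hn0.le, inv_inv]
      field_simp
    rw [hval] at hmono
    rw [← hfin2]
    exact hmono
  calc ∑ x : Fin n → Bool, |G β x| ≤ (I1 β)⁻¹ * ∫ t in Set.Ioi (0:ℝ), Φ t := step1
    _ = (I1 β)⁻¹ * ((∫ t in Set.Ioc (0:ℝ) a, Φ t) + ∫ t in Set.Ioi a, Φ t) := by rw [hsplit]
    _ ≤ (I1 β)⁻¹ * ((4/(1-β)) * (n:ℝ)^β + (2/β) * (n:ℝ)^β) := by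
        apply mul_le_mul_of_nonneg_left (add_le_add bound1 bound2)
        exact inv_nonneg.mpr (I1_pos hβ0 hβ1).le
    _ = (I1 β)⁻¹ * ((4/(1-β) + 2/β) * (n:ℝ)^β) := by ring

end NSaux

open DiscreteCube

namespace NSaux

open DiscreteCube

variable {n : ℕ}

/-- the delta function at `x0`. -/
def delta (n : ℕ) : (Fin n → Bool) → ℂ := fun x => if x = x0 then 1 else 0

lemma walsh_eq (A : Finset (Fin n)) (x : Fin n → Bool) :
    walsh A x = ((eA A x : ℝ) : ℂ) := by
  rw [walsh, eA]
  push_cast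
  apply Finset.prod_congr rfl
  intro j _
  cases (x j) <;> simp [DiscreteCube.sgn, eps]

lemma eA_x0 (A : Finset (Fin n)) : eA A (x0 : Fin n → Bool) = 1 := by
  simp [eA, x0, eps]

lemma coeff_delta (A : Finset (Fin n)) : coeff (delta n) A = ((2:ℂ)^n)⁻¹ := by
  rw [coeff]
  have hsum : ∑ y : Fin n → Bool, delta n y * walsh A y = walsh A x0 := by
    simp only [delta, ite_mul, one_mul, zero_mul]
    rw [Finset.sum_ite_eq' Finset.univ (x0 : Fin n → Bool) (walsh A)]
    simp
  rw [hsum, walsh_eq, eA_x0]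
  push_cast
  rw [one_div]

lemma deltaPow_delta (β : ℝ) (x : Fin n → Bool) :
    deltaPow β (delta n) x = ((G β x : ℝ) : ℂ) := by
  rw [deltaPow, G]
  push_cast
  apply Finset.sum_congr rfl
  intro A _
  rw [coeff_delta, walsh_eq]

lemma flip_x0_ne (j : Fin n) : DiscreteCube.flip j (x0 : Fin n → Bool) ≠ x0 := by
  intro hcon
  have := congrFun hcon j
  simp [DiscreteCube.flip, x0] at this

lemma flip_flip (j : Fin n) (x : Fin n → Bool) :
    DiscreteCube.flip j (DiscreteCube.flip j x) = x := by
  funext i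
  by_cases hij : i = j
  · subst hij
    simp [DiscreteCube.flip]
  · simp [DiscreteCube.flip, Function.update_of_ne hij]

lemma flip_inj : Function.Injective (fun j : Fin n => DiscreteCube.flip j x0) := by
  intro i j hij
  by_contra hne
  have h1 : DiscreteCube.flip i (x0 : Fin n → Bool) i = false := by
    simp [DiscreteCube.flip, x0]
  have h2 : DiscreteCube.flip j (x0 : Fin n → Bool) i = true := by
    simp [DiscreteCube.flip, Function.update_of_ne hne, x0]
  rw [show DiscreteCube.flip i (x0 : Fin n → Bool) = DiscreteCube.flip j x0 from hij] at h1
  rw [h1] at h2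
  exact Bool.false_ne_true h2

lemma grad_lower (j : Fin n) :
    1 ≤ gradLen (delta n) (DiscreteCube.flip j x0) := by
  rw [gradLen]
  have h1 : ‖pd j (delta n) (DiscreteCube.flip j x0)‖ = 1 := by
    rw [pd, flip_flip]
    rw [show delta n (DiscreteCube.flip j x0) = 0 from if_neg (flip_x0_ne j),
      show delta n (x0 : Fin n → Bool) = 1 from if_pos rfl]
    simp
  have h2 : (1:ℝ) ≤ ∑ i : Fin n, ‖pd i (delta n) (DiscreteCube.flip j x0)‖ ^ 2 := by
    have hs : ‖pd j (delta n) (DiscreteCube.flip j x0)‖ ^ 2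
        ≤ ∑ i : Fin n, ‖pd i (delta n) (DiscreteCube.flip j x0)‖ ^ 2 :=
      Finset.single_le_sum
        (f := fun i => ‖pd i (delta n) (DiscreteCube.flip j x0)‖ ^ 2)
        (fun i _ => by positivity) (Finset.mem_univ j)
    rw [h1] at hs
    simpa using hs
  have := Real.sqrt_le_sqrt h2
  rwa [Real.sqrt_one] at this

lemma sum_grad_ge {p : ℝ} (hp : 1 ≤ p) (n : ℕ) :
    (n:ℝ) ≤ ∑ x : Fin n → Bool, |gradLen (delta n) x| ^ p := by
  classical
  set T : Finset (Fin n → Bool) := Finset.image (fun j => DiscreteCube.flip j x0) Finset.univ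
    with hT
  have hsub : T ⊆ Finset.univ := Finset.subset_univ _
  have hstep : ∑ x ∈ T, |gradLen (delta n) x| ^ p
      ≤ ∑ x : Fin n → Bool, |gradLen (delta n) x| ^ p :=
    Finset.sum_le_sum_of_subset_of_nonneg hsub
      (fun x _ _ => Real.rpow_nonneg (abs_nonneg _) p)
  have hone : ∀ x ∈ T, (1:ℝ) ≤ |gradLen (delta n) x| ^ p := by
    intro x hx
    rw [hT, Finset.mem_image] at hx
    obtain ⟨j, _, rfl⟩ := hx
    have h1 := grad_lower j
    have habs : (1:ℝ) ≤ |gradLen (delta n) (DiscreteCube.flip j x0)| :=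
      le_trans h1 (le_abs_self _)
    calc (1:ℝ) = 1 ^ p := (Real.one_rpow p).symm
      _ ≤ |gradLen (delta n) (DiscreteCube.flip j x0)| ^ p :=
          Real.rpow_le_rpow zero_le_one habs (by linarith)
  have hcard : T.card = n := by
    rw [hT, Finset.card_image_of_injective _ flip_inj]
    simp
  calc (n:ℝ) = ∑ _x ∈ T, (1:ℝ) := by rw [Finset.sum_const, hcard]; simp
    _ ≤ ∑ x ∈ T, |gradLen (delta n) x| ^ p := Finset.sum_le_sum hone
    _ ≤ _ := hstep

end NSaux


/-- **(Naor–Schechtman).** Let `1 ≤ p < ∞` and `β > 0`. If there is a constant `C > 0`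
such that `‖ |∇f| ‖_p ≤ C ‖Δ^β f‖_p` for every `n ≥ 1` and every `f : Ω_n → ℂ`,
then `β ≥ 1/p`. -/
theorem cube_reverse_inequality_forces_beta (p : ℝ) (hp : 1 ≤ p) (β : ℝ) (hβ : 0 < β)
    (C : ℝ) (hC : 0 < C)
    (h : ∀ (n : ℕ), 1 ≤ n → ∀ f : (Fin n → Bool) → ℂ,
      rLp p (gradLen f) ≤ C * cLp p (deltaPow β f)) :
    1 / p ≤ β := by
  by_contra hcon
  push_neg at hcon
  have hp0 : (0:ℝ) < p := lt_of_lt_of_le one_pos hp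
  have hβ1 : β < 1 := by
    have h1p : 1/p ≤ 1 := by
      rw [div_le_one hp0]; exact hp
    linarith
  -- the key finite-n inequality
  set c' : ℝ := (NSaux.I1 β)⁻¹ * (4/(1-β) + 2/β) with hc'
  have hc'0 : 0 ≤ c' := by
    rw [hc']
    have hI := (NSaux.I1_pos hβ hβ1)
    have h1 : (0:ℝ) ≤ (NSaux.I1 β)⁻¹ := inv_nonneg.mpr hI.le
    have h2 : (0:ℝ) ≤ 4/(1-β) + 2/β := by
      have ha : (0:ℝ) ≤ 4/(1-β) := div_nonneg (by norm_num) (by linarith)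
      have hb : (0:ℝ) ≤ 2/β := div_nonneg (by norm_num) hβ.le
      linarith
    exact mul_nonneg h1 h2
  set E : ℝ := C^p * ((4:ℝ)^(β*(p-1)) * c') with hE
  have key : ∀ n : ℕ, 1 ≤ n → ((n:ℝ))^(1-β*p) ≤ E := by
    intro n hn
    have hn0 : (0:ℝ) < (n:ℝ) := by exact_mod_cast hn
    have hineq := h n hn (NSaux.delta n)
    have h2n : (0:ℝ) < 2^n := by positivity
    set M : ℝ := (4*(n:ℝ))^β with hM
    have hM0 : (0:ℝ) ≤ M := Real.rpow_nonneg (by positivity) β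
    set X : ℝ := M^(p-1) * (c' * (n:ℝ)^β) with hXdef
    have hX0 : (0:ℝ) ≤ X :=
      mul_nonneg (Real.rpow_nonneg hM0 _)
        (mul_nonneg hc'0 (Real.rpow_nonneg hn0.le _))
    -- lower bound for LHS
    have hL : ((n:ℝ)/2^n)^(1/p) ≤ rLp p (gradLen (NSaux.delta n)) := by
      rw [rLp]
      apply Real.rpow_le_rpow (by positivity) _ (by positivity)
      apply div_le_div_of_nonneg_right (NSaux.sum_grad_ge hp n) h2n.le
    -- upper bound for RHS
    have hGabs : ∀ x : Fin n → Bool,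
        ‖deltaPow β (NSaux.delta n) x‖ = |NSaux.G β x| := by
      intro x
      rw [NSaux.deltaPow_delta, Complex.norm_real, Real.norm_eq_abs]
    have hsum1 : ∑ x : Fin n → Bool, ‖deltaPow β (NSaux.delta n) x‖ ^ p ≤ X := by
      have hperx : ∀ x : Fin n → Bool,
          ‖deltaPow β (NSaux.delta n) x‖ ^ p ≤ M^(p-1) * |NSaux.G β x| := by
        intro x
        rw [hGabs x]
        rcases eq_or_lt_of_le (abs_nonneg (NSaux.G β x)) with h0 | hpos
        · rw [← h0, Real.zero_rpow (by positivity : p ≠ 0), mul_zero]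
        · have hsplit : |NSaux.G β x| ^ p = |NSaux.G β x|^(p-1) * |NSaux.G β x| := by
            have hh := Real.rpow_add hpos (p-1) 1
            rw [Real.rpow_one, show (p-1)+1 = p by ring] at hh
            exact hh
          rw [hsplit]
          apply mul_le_mul_of_nonneg_right _ (abs_nonneg _)
          exact Real.rpow_le_rpow (abs_nonneg _) (NSaux.abs_G_le hβ x) (by linarith)
      calc ∑ x : Fin n → Bool, ‖deltaPow β (NSaux.delta n) x‖ ^ p
          ≤ ∑ x : Fin n → Bool, M^(p-1) * |NSaux.G β x| :=
            Finset.sum_le_sum (fun x _ => hperx x)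
        _ = M^(p-1) * ∑ x : Fin n → Bool, |NSaux.G β x| := by rw [Finset.mul_sum]
        _ ≤ X := by
            rw [hXdef]
            apply mul_le_mul_of_nonneg_left _ (Real.rpow_nonneg hM0 _)
            have hsle := NSaux.sum_abs_G_le hβ hβ1 hn
            rw [hc', mul_assoc]
            exact hsle
    have hR : cLp p (deltaPow β (NSaux.delta n)) ≤ (X/2^n)^(1/p) := by
      rw [cLp]
      apply Real.rpow_le_rpow _ _ (by positivity)
      · apply div_nonneg _ h2n.le
        apply Finset.sum_nonneg
        intro x _
        positivity
      · exact div_le_div_of_nonneg_right hsum1 h2n.le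
    -- combine using the hypothesis
    have hmain : ((n:ℝ)/2^n)^(1/p) ≤ C * (X/2^n)^(1/p) :=
      hL.trans (hineq.trans (mul_le_mul_of_nonneg_left hR hC.le))
    have hpow : ∀ u : ℝ, 0 ≤ u → (u^(1/p))^p = u := by
      intro u hu
      rw [← Real.rpow_mul hu, one_div, inv_mul_cancel₀ hp0.ne', Real.rpow_one]
    have hXdiv0 : (0:ℝ) ≤ X/2^n := div_nonneg hX0 h2n.le
    have hfinal : (n:ℝ)/2^n ≤ C^p * (X/2^n) := by
      have h1 := Real.rpow_le_rpow (Real.rpow_nonneg (by positivity) _) hmain hp0.le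
      rw [hpow _ (by positivity)] at h1
      rw [Real.mul_rpow hC.le (Real.rpow_nonneg hXdiv0 _), hpow _ hXdiv0] at h1
      exact h1
    have hX : (n:ℝ) ≤ C^p * X := by
      have h2 := mul_le_mul_of_nonneg_right hfinal h2n.le
      rw [div_mul_cancel₀ _ h2n.ne'] at h2
      rw [mul_assoc, div_mul_cancel₀ X h2n.ne'] at h2
      exact h2
    -- exponent arithmetic
    have hMexp : M^(p-1) = (4:ℝ)^(β*(p-1)) * (n:ℝ)^(β*(p-1)) := by
      rw [hM, ← Real.rpow_mul (by positivity : (0:ℝ) ≤ 4*(n:ℝ)),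
        Real.mul_rpow (by norm_num) hn0.le]
    have hnn : (n:ℝ)^(β*(p-1)) * (n:ℝ)^β = (n:ℝ)^(β*p) := by
      rw [← Real.rpow_add hn0]
      congr 1
      ring
    have hXE : C^p * X = E * (n:ℝ)^(β*p) := by
      rw [hXdef, hMexp, hE, ← hnn]
      ring
    rw [hXE] at hX
    have hnp : (0:ℝ) < (n:ℝ)^(β*p) := Real.rpow_pos_of_pos hn0 _
    rw [show (1:ℝ)-β*p = 1 + (-(β*p)) by ring, Real.rpow_add hn0, Real.rpow_one,
      Real.rpow_neg hn0.le]
    rw [mul_inv_le_iff₀ hnp]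
    linarith
  -- contradiction by letting n → ∞
  have hγ : 0 < 1 - β*p := by
    have h1 : (1/p)*p = 1 := by field_simp
    nlinarith
  have htends : Filter.Tendsto (fun n : ℕ => ((n:ℝ))^(1-β*p)) Filter.atTop Filter.atTop :=
    (tendsto_rpow_atTop hγ).comp tendsto_natCast_atTop_atTop
  obtain ⟨n, hn⟩ := ((htends.eventually_gt_atTop E).and (Filter.eventually_ge_atTop 1)).exists
  exact absurd (key n hn.2) (not_le.mpr hn.1)
end

section
/- For every n ≥ 1, every 1 ≤ p ≤ 2, every subset 𝒥 ⊆ {1,…,n} and every function f : Ω_n → ℂ, ‖𝒱_𝒥(f)‖_p ≤ (π/4) ‖ |∇_𝒥 f| ‖_p, where 𝒱_𝒥(f) = f − 𝒫_{𝒥̄}(f) is the part of f whose Walsh spectrum meets 𝒥. -/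
open Real Finset

namespace DiscreteCube

/-- The part of `f` whose Walsh spectrum meets `𝒥`:
`𝒱_𝒥(f) = Σ_{A∩𝒥≠∅} f̂(A) ω_A = f − 𝒫_{𝒥̄}(f)`. -/
noncomputable def specPart {n : ℕ} (J : Finset (Fin n)) (f : (Fin n → Bool) → ℂ)
    (x : Fin n → Bool) : ℂ :=
  ∑ A ∈ Finset.univ.filter (fun A : Finset (Fin n) => (A ∩ J).Nonempty),
    coeff f A * walsh A x

/-- Partial gradient length `|∇_𝒥 f|(x) = (Σ_{j∈𝒥} |(∂_j f)(x)|²)^{1/2}`. -/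
noncomputable def gradLenJ {n : ℕ} (J : Finset (Fin n)) (f : (Fin n → Bool) → ℂ)
    (x : Fin n → Bool) : ℝ :=
  Real.sqrt (∑ j ∈ J, ‖pd j f x‖ ^ 2)

end DiscreteCube

namespace CubeAux
open DiscreteCube Real Finset

variable {n : ℕ}

/-! ### Basic cube algebra -/

def pmul (x y : Fin n → Bool) : Fin n → Bool := fun j => x j == y j

lemma pmul_pmul (x y : Fin n → Bool) : pmul (pmul x y) y = x := by
  funext j; cases h1 : x j <;> cases h2 : y j <;> simp [pmul, h1, h2]

lemma sgn_beq (a b : Bool) : sgn (a == b) = sgn a * sgn b := by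
  cases a <;> cases b <;> simp [sgn]

lemma walsh_pmul (A : Finset (Fin n)) (x y : Fin n → Bool) :
    walsh A (pmul x y) = walsh A x * walsh A y := by
  unfold walsh
  rw [← Finset.prod_mul_distrib]
  exact Finset.prod_congr rfl fun j _ => sgn_beq _ _

lemma sum_pmul {M : Type*} [AddCommMonoid M] (g : (Fin n → Bool) → M) (y : Fin n → Bool) :
    ∑ x : Fin n → Bool, g (pmul x y) = ∑ x : Fin n → Bool, g x := by
  apply Fintype.sum_bijective (fun x => pmul x y)
  · exact Function.Involutive.bijective (fun x => pmul_pmul x y)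
  · intro x; rfl

lemma sum_pi_bool {R : Type*} [CommSemiring R] (h : Fin n → Bool → R) :
    ∑ x : Fin n → Bool, ∏ j, h j (x j) = ∏ j, (h j true + h j false) := by
  have := Finset.prod_univ_sum (fun _ : Fin n => (Finset.univ : Finset Bool)) (fun j b => h j b)
  rw [Fintype.piFinset_univ] at this
  rw [← this]
  exact Finset.prod_congr rfl fun j _ => by rw [Fintype.sum_bool]

lemma walsh_full (A : Finset (Fin n)) (x : Fin n → Bool) :
    walsh A x = ∏ j, (if j ∈ A then sgn (x j) else 1) := by
  rw [Finset.prod_ite_mem, Finset.univ_inter]; rfl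

/-! ### Fourier inversion -/

lemma sum_walsh_all (z : Fin n → Bool) :
    ∑ A : Finset (Fin n), walsh A z = if z = (fun _ => true) then (2:ℂ)^n else 0 := by
  have h1 : ∑ A : Finset (Fin n), walsh A z = ∏ j, (sgn (z j) + 1) := by
    rw [Finset.prod_add]
    exact Finset.sum_congr rfl fun A _ => by simp [walsh]
  rw [h1]
  by_cases hz : z = fun _ => true
  · subst hz; simp [sgn]; norm_num
  · obtain ⟨j, hj⟩ : ∃ j, z j = false := by
      by_contra h
      push_neg at h
      exact hz (funext fun j => by simpa using h j)
    exact (if_neg hz) ▸ Finset.prod_eq_zero (Finset.mem_univ j) (by simp [hj, sgn])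

lemma inversion (f : (Fin n → Bool) → ℂ) (x : Fin n → Bool) :
    ∑ A : Finset (Fin n), coeff f A * walsh A x = f x := by
  unfold coeff
  have key : ∀ y : Fin n → Bool,
      ∑ A : Finset (Fin n), walsh A y * walsh A x = if y = x then (2:ℂ)^n else 0 := by
    intro y
    have h1 : ∀ A : Finset (Fin n), walsh A y * walsh A x = walsh A (pmul y x) := fun A =>
      (walsh_pmul A y x).symm
    simp only [h1, sum_walsh_all]
    congr 1
    simp only [eq_iff_iff]
    constructor
    · intro h
      funext j
      have := congrFun h j
      simpa [pmul] using this
    · intro h; subst h; funext j; simp [pmul]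
  calc ∑ A : Finset (Fin n), (∑ y : Fin n → Bool, f y * walsh A y) / 2 ^ n * walsh A x
      = ∑ A : Finset (Fin n), ∑ y : Fin n → Bool, f y * (walsh A y * walsh A x) / 2 ^ n := by
        refine Finset.sum_congr rfl fun A _ => ?_
        rw [Finset.sum_div, Finset.sum_mul]
        exact Finset.sum_congr rfl fun y _ => by ring
    _ = ∑ y : Fin n → Bool, ∑ A : Finset (Fin n), f y * (walsh A y * walsh A x) / 2 ^ n :=
        Finset.sum_comm
    _ = ∑ y : Fin n → Bool, f y * (if y = x then (2:ℂ)^n else 0) / 2 ^ n := by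
        refine Finset.sum_congr rfl fun y _ => ?_
        rw [← key y, Finset.mul_sum, Finset.sum_div]
    _ = f x := by
      rw [Finset.sum_eq_single x]
      · simp
      · intro y _ hyx; simp [hyx]
      · intro h; simp at h

/-! ### The averaging operator -/

noncomputable def mu (c : ℝ) (b : Bool) : ℝ := if b then (1+c)/2 else (1-c)/2
noncomputable def wt (c : ℝ) (b : Bool) : ℝ := if b then (1+c)⁻¹ else -(1-c)⁻¹
def nu (b : Bool) : ℝ := if b then 1 else 0
noncomputable def base (J : Finset (Fin n)) (c : ℝ) (j : Fin n) (b : Bool) : ℝ :=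
  if j ∈ J then mu c b else nu b
noncomputable def bigW (J : Finset (Fin n)) (c : ℝ) (η : Fin n → Bool) : ℝ :=
  ∏ j, base J c j (η j)

noncomputable def Tmap (J : Finset (Fin n)) (c : ℝ) (f : (Fin n → Bool) → ℂ)
    (x : Fin n → Bool) : ℂ :=
  ∑ η : Fin n → Bool, (bigW J c η : ℂ) * ∑ j ∈ J, (wt c (η j) : ℂ) * pd j f (pmul x η)

lemma base_nonneg {c : ℝ} (hc0 : 0 ≤ c) (hc1 : c ≤ 1) (J : Finset (Fin n)) (j : Fin n)
    (b : Bool) : 0 ≤ base J c j b := by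
  unfold base mu nu
  split <;> cases b <;> simp <;> linarith

lemma bigW_nonneg {c : ℝ} (hc0 : 0 ≤ c) (hc1 : c ≤ 1) (J : Finset (Fin n))
    (η : Fin n → Bool) : 0 ≤ bigW J c η :=
  Finset.prod_nonneg fun j _ => base_nonneg hc0 hc1 J j (η j)

lemma sum_bigW {c : ℝ} (J : Finset (Fin n)) : ∑ η : Fin n → Bool, bigW J c η = 1 := by
  unfold bigW
  rw [sum_pi_bool]
  rw [Finset.prod_eq_one]
  intro j _
  unfold base mu nu
  split
  · norm_num; ring
  · norm_num

lemma sgn_not (b : Bool) : sgn (!b) = -sgn b := by cases b <;> simp [sgn]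

lemma walsh_flip (j : Fin n) (A : Finset (Fin n)) (x : Fin n → Bool) :
    walsh A (DiscreteCube.flip j x) = (if j ∈ A then -1 else 1) * walsh A x := by
  by_cases hj : j ∈ A
  · rw [if_pos hj]
    unfold walsh
    rw [← Finset.mul_prod_erase A _ hj, ← Finset.mul_prod_erase A (fun i => sgn (x i)) hj]
    have h1 : sgn (DiscreteCube.flip j x j) = -sgn (x j) := by
      rw [show DiscreteCube.flip j x j = !(x j) from Function.update_self _ _ _, sgn_not]
    have h2 : ∀ i ∈ A.erase j, sgn (DiscreteCube.flip j x i) = sgn (x i) := by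
      intro i hi
      rw [show DiscreteCube.flip j x i = x i from Function.update_of_ne (Finset.ne_of_mem_erase hi) _ _]
    rw [h1, Finset.prod_congr rfl h2]
    ring
  · rw [if_neg hj, one_mul]
    unfold walsh
    refine Finset.prod_congr rfl fun i hi => ?_
    rw [show DiscreteCube.flip j x i = x i from Function.update_of_ne (fun h : i = j => hj (h ▸ hi)) _ _]

lemma pd_walsh (j : Fin n) (A : Finset (Fin n)) (x : Fin n → Bool) :
    pd j (walsh A) x = if j ∈ A then 2 * walsh A x else 0 := by
  unfold pd
  rw [walsh_flip]
  split <;> ring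

lemma factor_eval {c : ℝ} (h1 : (1:ℝ) + c ≠ 0) (h2 : (1:ℝ) - c ≠ 0)
    (J A : Finset (Fin n)) {j : Fin n} (hjJ : j ∈ J) (hjA : j ∈ A) (i : Fin n) :
    ((base J c i true : ℂ) * (if i ∈ A then sgn true else 1) * (if i = j then (wt c true : ℂ) else 1))
    + ((base J c i false : ℂ) * (if i ∈ A then sgn false else 1) * (if i = j then (wt c false : ℂ) else 1))
    = if i ∈ (J ∩ A).erase j then (c : ℂ) else 1 := by
  have h1' : (1:ℂ) + c ≠ 0 := by exact_mod_cast (Complex.ofReal_ne_zero.2 h1)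
  have h2' : (1:ℂ) - c ≠ 0 := by
    have := Complex.ofReal_ne_zero.2 h2; push_cast at this; exact this
  by_cases hij : i = j
  · subst hij
    simp only [if_pos hjA, if_pos rfl, Finset.mem_erase, ne_eq, not_true_eq_false,
      false_and, if_neg (by simp : ¬ (i ∈ (J ∩ A).erase i))]
    simp only [base, if_pos hjJ, mu, wt, sgn, if_pos, if_neg]
    push_cast
    field_simp
    ring
  · by_cases hiJ : i ∈ J <;> by_cases hiA : i ∈ A
    · have : i ∈ (J ∩ A).erase j := Finset.mem_erase.2 ⟨hij, Finset.mem_inter.2 ⟨hiJ, hiA⟩⟩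
      simp only [if_pos this, if_pos hiA, if_neg hij, base, if_pos hiJ, mu, sgn]
      push_cast
      norm_num
      ring
    · have : ¬ i ∈ (J ∩ A).erase j := by
        simp [Finset.mem_erase, Finset.mem_inter, hiA]
      simp only [if_neg this, if_neg hiA, if_neg hij, base, if_pos hiJ, mu]
      push_cast
      ring
    · have : ¬ i ∈ (J ∩ A).erase j := by
        simp [Finset.mem_erase, Finset.mem_inter, hiJ]
      simp only [if_neg this, if_pos hiA, if_neg hij, base, if_neg hiJ, nu, sgn]
      norm_num
    · have : ¬ i ∈ (J ∩ A).erase j := by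
        simp [Finset.mem_erase, Finset.mem_inter, hiJ]
      simp only [if_neg this, if_neg hiA, if_neg hij, base, if_neg hiJ, nu]
      norm_num

lemma fact_eta {c : ℝ} (h1 : (1:ℝ) + c ≠ 0) (h2 : (1:ℝ) - c ≠ 0) (J A : Finset (Fin n))
    {j : Fin n} (hj : j ∈ J ∩ A) :
    (∑ η : Fin n → Bool, (bigW J c η : ℂ) * walsh A η * (wt c (η j):ℂ))
      = (c:ℂ) ^ ((J ∩ A).card - 1) := by
  obtain ⟨hjJ, hjA⟩ := Finset.mem_inter.1 hj
  have expand : ∀ η : Fin n → Bool, (bigW J c η : ℂ) * walsh A η * (wt c (η j):ℂ)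
      = ∏ i, ((base J c i (η i) : ℂ) * (if i ∈ A then sgn (η i) else 1)
          * (if i = j then (wt c (η i) : ℂ) else 1)) := by
    intro η
    rw [Finset.prod_mul_distrib, Finset.prod_mul_distrib]
    congr 1
    congr 1
    · rw [bigW]; push_cast; rfl
    · exact walsh_full A η
    · rw [Finset.prod_ite_eq']
      simp
  simp only [expand]
  rw [sum_pi_bool (fun i b => (base J c i b : ℂ) * (if i ∈ A then sgn b else 1)
      * (if i = j then (wt c b : ℂ) else 1))]
  rw [Finset.prod_congr rfl (fun i _ => factor_eval h1 h2 J A hjJ hjA i)]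
  rw [Finset.prod_ite_mem, Finset.univ_inter, Finset.prod_const,
    Finset.card_erase_of_mem hj]

lemma Tmap_walsh {c : ℝ} (hc0 : 0 ≤ c) (hc1 : c < 1) (J A : Finset (Fin n))
    (x : Fin n → Bool) :
    Tmap J c (walsh A) x
      = 2 * ((A ∩ J).card : ℂ) * (c:ℂ) ^ ((A ∩ J).card - 1) * walsh A x := by
  have h1 : (1:ℝ) + c ≠ 0 := by linarith
  have h2 : (1:ℝ) - c ≠ 0 := by linarith
  have inner : ∀ η : Fin n → Bool,
      (∑ j ∈ J, (wt c (η j):ℂ) * pd j (walsh A) (pmul x η))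
        = ∑ j ∈ J ∩ A, (wt c (η j):ℂ) * (2 * (walsh A x * walsh A η)) := by
    intro η
    rw [← Finset.filter_mem_eq_inter, Finset.sum_filter]
    refine Finset.sum_congr rfl fun j _ => ?_
    rw [pd_walsh]
    split
    · rw [walsh_pmul]; try ring
    · rw [mul_zero]
  unfold Tmap
  simp only [inner]
  calc ∑ η : Fin n → Bool, (bigW J c η : ℂ)
          * ∑ j ∈ J ∩ A, (wt c (η j):ℂ) * (2 * (walsh A x * walsh A η))
      = ∑ j ∈ J ∩ A, ∑ η : Fin n → Bool,
          (2 * walsh A x) * ((bigW J c η : ℂ) * walsh A η * (wt c (η j):ℂ)) := by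
        rw [Finset.sum_comm]
        refine Finset.sum_congr rfl fun η _ => ?_
        rw [Finset.mul_sum]
        refine Finset.sum_congr rfl fun j _ => by ring
    _ = ∑ j ∈ J ∩ A, (2 * walsh A x) * ((c:ℂ) ^ ((J ∩ A).card - 1)) := by
        refine Finset.sum_congr rfl fun j hj => ?_
        rw [← Finset.mul_sum, fact_eta h1 h2 J A hj]
    _ = 2 * ((A ∩ J).card : ℂ) * (c:ℂ) ^ ((A ∩ J).card - 1) * walsh A x := by
        rw [Finset.sum_const, nsmul_eq_mul, Finset.inter_comm A J]
        ring

lemma pd_expand (f : (Fin n → Bool) → ℂ) (j : Fin n) (z : Fin n → Bool) :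
    pd j f z = ∑ A : Finset (Fin n), coeff f A * pd j (walsh A) z := by
  have : ∀ A : Finset (Fin n), coeff f A * pd j (walsh A) z
      = coeff f A * walsh A z - coeff f A * walsh A (DiscreteCube.flip j z) := fun A => by
    unfold pd; ring
  simp only [this]
  rw [Finset.sum_sub_distrib, inversion, inversion]
  rfl

lemma Tmap_linear (J : Finset (Fin n)) (c : ℝ) (f : (Fin n → Bool) → ℂ) (x : Fin n → Bool) :
    Tmap J c f x = ∑ A : Finset (Fin n), coeff f A * Tmap J c (walsh A) x := by
  unfold Tmap
  simp only [pd_expand f]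
  have step1 : ∀ η : Fin n → Bool, (bigW J c η : ℂ)
      * (∑ j ∈ J, (wt c (η j) : ℂ) * ∑ A : Finset (Fin n), coeff f A * pd j (walsh A) (pmul x η))
      = ∑ j ∈ J, ∑ A : Finset (Fin n),
          coeff f A * ((bigW J c η : ℂ) * ((wt c (η j) : ℂ) * pd j (walsh A) (pmul x η))) := by
    intro η
    rw [Finset.mul_sum]
    refine Finset.sum_congr rfl fun j _ => ?_
    rw [Finset.mul_sum, Finset.mul_sum]
    try exact Finset.sum_congr rfl fun A _ => by ring
  have step2 : ∀ A : Finset (Fin n), coeff f A * (∑ η : Fin n → Bool, (bigW J c η : ℂ)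
      * ∑ j ∈ J, (wt c (η j) : ℂ) * pd j (walsh A) (pmul x η))
      = ∑ η : Fin n → Bool, ∑ j ∈ J,
          coeff f A * ((bigW J c η : ℂ) * ((wt c (η j) : ℂ) * pd j (walsh A) (pmul x η))) := by
    intro A
    rw [Finset.mul_sum]
    refine Finset.sum_congr rfl fun η _ => ?_
    rw [Finset.mul_sum, Finset.mul_sum]
    try exact Finset.sum_congr rfl fun j _ => by ring
  rw [Finset.sum_congr rfl fun η _ => step1 η, Finset.sum_congr rfl fun A _ => step2 A]
  have swap1 : (∑ η : Fin n → Bool, ∑ j ∈ J, ∑ A : Finset (Fin n),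
        coeff f A * ((bigW J c η : ℂ) * ((wt c (η j) : ℂ) * pd j (walsh A) (pmul x η))))
      = ∑ η : Fin n → Bool, ∑ A : Finset (Fin n), ∑ j ∈ J,
        coeff f A * ((bigW J c η : ℂ) * ((wt c (η j) : ℂ) * pd j (walsh A) (pmul x η))) :=
    Finset.sum_congr rfl fun η _ => Finset.sum_comm
  rw [swap1]
  exact Finset.sum_comm

/-! ### Second moment computation -/

lemma moment {c : ℝ} (h1 : (1:ℝ) + c ≠ 0) (h2 : (1:ℝ) - c ≠ 0) (J : Finset (Fin n))
    {j k : Fin n} (hj : j ∈ J) (hk : k ∈ J) :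
    ∑ η : Fin n → Bool, bigW J c η * wt c (η j) * wt c (η k)
      = if j = k then (1 - c^2)⁻¹ else 0 := by
  have expand : ∀ η : Fin n → Bool, bigW J c η * wt c (η j) * wt c (η k)
      = ∏ i, (base J c i (η i) * (if i = j then wt c (η i) else 1)
          * (if i = k then wt c (η i) else 1)) := by
    intro η
    rw [Finset.prod_mul_distrib, Finset.prod_mul_distrib]
    congr 1
    congr 1
    · rw [Finset.prod_ite_eq']; simp
    · rw [Finset.prod_ite_eq']; simp
  simp only [expand]
  rw [sum_pi_bool (fun i b => base J c i b * (if i = j then wt c b else 1)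
      * (if i = k then wt c b else 1))]
  by_cases hjk : j = k
  · subst hjk
    rw [if_pos rfl]
    have hfac : ∀ i : Fin n,
        (base J c i true * (if i = j then wt c true else 1) * (if i = j then wt c true else 1)
        + base J c i false * (if i = j then wt c false else 1) * (if i = j then wt c false else 1))
        = if i = j then (1 - c^2)⁻¹ else 1 := by
      intro i
      by_cases hij : i = j
      · subst hij
        rw [if_pos rfl, if_pos rfl, if_pos rfl]
        simp only [base, if_pos hj, mu, wt, if_pos, if_neg]
        have h3 : (1:ℝ) - c^2 ≠ 0 := by
          have h4 := mul_ne_zero h2 h1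
          intro hh; apply h4; linear_combination hh
        norm_num
        field_simp
        ring
      · rw [if_neg hij, if_neg hij, if_neg hij]
        by_cases hiJ : i ∈ J
        · simp only [base, if_pos hiJ, mu]; norm_num; ring
        · simp only [base, if_neg hiJ, nu]; norm_num
    rw [Finset.prod_congr rfl fun i _ => hfac i, Finset.prod_ite_eq']
    simp
  · rw [if_neg hjk]
    refine Finset.prod_eq_zero (Finset.mem_univ j) ?_
    rw [if_pos rfl, if_pos rfl, if_neg hjk, if_neg hjk]
    simp only [base, if_pos hj, mu, wt, if_pos, if_neg]
    norm_num
    field_simp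
    ring

lemma sq_exp {c : ℝ} (h1 : (1:ℝ) + c ≠ 0) (h2 : (1:ℝ) - c ≠ 0) (J : Finset (Fin n))
    (a : Fin n → ℂ) :
    ∑ η : Fin n → Bool, bigW J c η * ‖∑ j ∈ J, (wt c (η j) : ℂ) * a j‖ ^ 2
      = (1 - c^2)⁻¹ * ∑ j ∈ J, ‖a j‖ ^ 2 := by
  set V : (Fin n → Bool) → ℂ := fun η => ∑ j ∈ J, (wt c (η j) : ℂ) * a j with hV
  apply Complex.ofReal_injective
  push_cast
  have habs : ∀ z : ℂ, ((‖z‖ : ℂ))^2 = z * (starRingEnd ℂ) z := by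
    intro z
    rw [Complex.mul_conj]
    norm_cast
    rw [Complex.sq_norm]
  calc ∑ η : Fin n → Bool, (bigW J c η : ℂ) * (‖V η‖ : ℂ) ^ 2
      = ∑ η : Fin n → Bool, ∑ j ∈ J, ∑ k ∈ J,
          ((bigW J c η : ℂ) * (wt c (η j) : ℂ) * (wt c (η k) : ℂ))
            * (a j * (starRingEnd ℂ) (a k)) := by
        refine Finset.sum_congr rfl fun η _ => ?_
        rw [habs]
        rw [hV]
        simp only [map_sum, map_mul, Complex.conj_ofReal]
        rw [Finset.sum_mul_sum]
        rw [Finset.mul_sum]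
        refine Finset.sum_congr rfl fun j _ => ?_
        rw [Finset.mul_sum]
        refine Finset.sum_congr rfl fun k _ => by ring
    _ = ∑ j ∈ J, ∑ k ∈ J, (∑ η : Fin n → Bool,
          ((bigW J c η : ℂ) * (wt c (η j) : ℂ) * (wt c (η k) : ℂ)))
            * (a j * (starRingEnd ℂ) (a k)) := by
        rw [Finset.sum_comm]
        refine Finset.sum_congr rfl fun j _ => ?_
        rw [Finset.sum_comm]
        refine Finset.sum_congr rfl fun k _ => ?_
        rw [Finset.sum_mul]
    _ = ∑ j ∈ J, ∑ k ∈ J, (if j = k then ((1 - c^2)⁻¹ : ℂ) else 0)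
            * (a j * (starRingEnd ℂ) (a k)) := by
        refine Finset.sum_congr rfl fun j hj => Finset.sum_congr rfl fun k hk => ?_
        have : (∑ η : Fin n → Bool,
            ((bigW J c η : ℂ) * (wt c (η j) : ℂ) * (wt c (η k) : ℂ)))
            = ((∑ η : Fin n → Bool, bigW J c η * wt c (η j) * wt c (η k) : ℝ) : ℂ) := by
          push_cast; rfl
        rw [this, moment h1 h2 J hj hk]
        split <;> simp
    _ = ∑ j ∈ J, ((1 - c^2)⁻¹ : ℂ) * (a j * (starRingEnd ℂ) (a j)) := by
        refine Finset.sum_congr rfl fun j hj => ?_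
        simp only [ite_mul, zero_mul]
        rw [Finset.sum_ite_eq J j]
        simp [hj]
    _ = ((1 - c^2)⁻¹ : ℂ) * ∑ j ∈ J, ((‖a j‖ : ℂ)) ^ 2 := by
        rw [Finset.mul_sum]
        refine Finset.sum_congr rfl fun j _ => ?_
        rw [habs]

/-! ### The key `L^p` bound -/

lemma key_bound {c s : ℝ} (hc0 : 0 ≤ c) (hc1 : c < 1) (hs : 0 < s) (hcs : c^2 + s^2 = 1)
    {p : ℝ} (hp1 : 1 ≤ p) (hp2 : p ≤ 2) (J : Finset (Fin n)) (f : (Fin n → Bool) → ℂ) :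
    ∑ x : Fin n → Bool, ‖Tmap J c f x‖ ^ p
      ≤ ∑ x : Fin n → Bool, (s⁻¹ * gradLenJ J f x) ^ p := by
  have h1 : (1:ℝ) + c ≠ 0 := by linarith
  have h2 : (1:ℝ) - c ≠ 0 := by linarith
  have hp0 : (0:ℝ) < p := lt_of_lt_of_le one_pos hp1
  have hW0 : ∀ η : Fin n → Bool, 0 ≤ bigW J c η := bigW_nonneg hc0 (le_of_lt hc1) J
  have stepA : ∀ x : Fin n → Bool, ‖Tmap J c f x‖ ^ p
      ≤ ∑ η : Fin n → Bool, bigW J c η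
          * ‖∑ j ∈ J, (wt c (η j) : ℂ) * pd j f (pmul x η)‖ ^ p := by
    intro x
    have t1 : ‖Tmap J c f x‖
        ≤ ∑ η : Fin n → Bool, bigW J c η
            * ‖∑ j ∈ J, (wt c (η j) : ℂ) * pd j f (pmul x η)‖ := by
      unfold Tmap
      refine le_trans (norm_sum_le _ _) ?_
      refine le_of_eq (Finset.sum_congr rfl fun η _ => ?_)
      rw [norm_mul, Complex.norm_real, Real.norm_eq_abs, abs_of_nonneg (hW0 η)]
    refine le_trans (Real.rpow_le_rpow (norm_nonneg _) t1 (le_of_lt hp0)) ?_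
    exact Real.rpow_arith_mean_le_arith_mean_rpow Finset.univ _ _
      (fun η _ => hW0 η) (sum_bigW J) (fun η _ => norm_nonneg _) hp1
  have stepC : ∀ z : Fin n → Bool,
      ∑ η : Fin n → Bool, bigW J c η
          * ‖∑ j ∈ J, (wt c (η j) : ℂ) * pd j f z‖ ^ p
        ≤ (s⁻¹ * gradLenJ J f z) ^ p := by
    intro z
    set V : (Fin n → Bool) → ℝ := fun η =>
      ‖∑ j ∈ J, (wt c (η j) : ℂ) * pd j f z‖ with hVdef
    have hV0 : ∀ η, 0 ≤ V η := fun η => norm_nonneg _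
    have jensen2 : ∑ η : Fin n → Bool, bigW J c η * V η ^ p
        ≤ (∑ η : Fin n → Bool, bigW J c η * V η ^ (2:ℕ)) ^ (p/2) := by
      have hq1 : (1:ℝ) ≤ 2/p := by
        rw [le_div_iff₀ hp0]; linarith
      have h := Real.arith_mean_le_rpow_mean Finset.univ (bigW J c) (fun η => V η ^ p)
        (fun η _ => hW0 η) (sum_bigW J)
        (fun η _ => Real.rpow_nonneg (hV0 η) p) hq1
      have e1 : ∀ η : Fin n → Bool, (V η ^ p) ^ (2/p) = V η ^ (2:ℕ) := by
        intro η
        rw [← Real.rpow_natCast (V η) 2, ← Real.rpow_mul (hV0 η)]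
        congr 1
        field_simp
        norm_num
      have e2 : 1/(2/p) = p/2 := by
        field_simp
      rw [e2] at h
      simp only [e1] at h
      exact h
    have hsq : ∑ η : Fin n → Bool, bigW J c η * V η ^ (2:ℕ)
        = s⁻¹ ^ (2:ℕ) * ∑ j ∈ J, ‖pd j f z‖ ^ 2 := by
      rw [sq_exp h1 h2 J (fun j => pd j f z)]
      congr 1
      have : (1:ℝ) - c^2 = s^2 := by linarith
      rw [this]
      rw [inv_pow]
    have hD0 : (0:ℝ) ≤ ∑ j ∈ J, ‖pd j f z‖ ^ 2 :=
      Finset.sum_nonneg fun j _ => pow_nonneg (norm_nonneg _) 2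
    have hcollapse : (s⁻¹ ^ (2:ℕ) * ∑ j ∈ J, ‖pd j f z‖ ^ 2) ^ (p/2)
        = (s⁻¹ * gradLenJ J f z) ^ p := by
      have hgl : gradLenJ J f z ^ (2:ℕ) = ∑ j ∈ J, ‖pd j f z‖ ^ 2 := by
        rw [gradLenJ, Real.sq_sqrt hD0]
      have hgz : (0:ℝ) ≤ s⁻¹ * gradLenJ J f z :=
        mul_nonneg (inv_nonneg.2 (le_of_lt hs))
          (by rw [gradLenJ]; exact Real.sqrt_nonneg _)
      rw [← hgl, ← mul_pow]
      rw [← Real.rpow_natCast (s⁻¹ * gradLenJ J f z) 2, ← Real.rpow_mul hgz]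
      congr 1
      push_cast
      ring
    calc ∑ η : Fin n → Bool, bigW J c η * V η ^ p
        ≤ (∑ η : Fin n → Bool, bigW J c η * V η ^ (2:ℕ)) ^ (p/2) := jensen2
      _ = (s⁻¹ * gradLenJ J f z) ^ p := by rw [hsq, hcollapse]
  calc ∑ x : Fin n → Bool, ‖Tmap J c f x‖ ^ p
      ≤ ∑ x : Fin n → Bool, ∑ η : Fin n → Bool, bigW J c η
          * ‖∑ j ∈ J, (wt c (η j) : ℂ) * pd j f (pmul x η)‖ ^ p :=
        Finset.sum_le_sum fun x _ => stepA x
    _ = ∑ η : Fin n → Bool, ∑ x : Fin n → Bool, bigW J c η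
          * ‖∑ j ∈ J, (wt c (η j) : ℂ) * pd j f (pmul x η)‖ ^ p :=
        Finset.sum_comm
    _ = ∑ η : Fin n → Bool, ∑ z : Fin n → Bool, bigW J c η
          * ‖∑ j ∈ J, (wt c (η j) : ℂ) * pd j f z‖ ^ p := by
        refine Finset.sum_congr rfl fun η _ => ?_
        exact sum_pmul (fun z => bigW J c η
          * ‖∑ j ∈ J, (wt c (η j) : ℂ) * pd j f z‖ ^ p) η
    _ = ∑ z : Fin n → Bool, ∑ η : Fin n → Bool, bigW J c η
          * ‖∑ j ∈ J, (wt c (η j) : ℂ) * pd j f z‖ ^ p :=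
        Finset.sum_comm
    _ ≤ ∑ z : Fin n → Bool, (s⁻¹ * gradLenJ J f z) ^ p :=
        Finset.sum_le_sum fun z _ => stepC z

/-! ### Integral computation -/

lemma integral_phi (k : ℕ) :
    ∫ θ in (0:ℝ)..(π/2), (k:ℝ) * Real.cos θ ^ (k-1) * Real.sin θ
      = if k = 0 then 0 else 1 := by
  rcases Nat.eq_zero_or_pos k with hk | hk
  · subst hk; simp
  · rw [if_neg (Nat.pos_iff_ne_zero.1 hk)]
    have hder : ∀ θ ∈ Set.uIcc (0:ℝ) (π/2),
        HasDerivAt (fun t => -(Real.cos t ^ k)) ((k:ℝ) * Real.cos θ ^ (k-1) * Real.sin θ) θ := by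
      intro θ _
      have h := ((Real.hasDerivAt_cos θ).pow k).neg
      convert (show HasDerivAt (fun t => -(Real.cos t ^ k)) _ θ from h) using 1
      ring
    have hint : IntervalIntegrable (fun θ => (k:ℝ) * Real.cos θ ^ (k-1) * Real.sin θ)
        MeasureTheory.volume 0 (π/2) := by
      apply Continuous.intervalIntegrable
      continuity
    rw [intervalIntegral.integral_eq_sub_of_hasDerivAt hder hint]
    rw [Real.cos_pi_div_two, Real.cos_zero]
    rw [zero_pow (Nat.pos_iff_ne_zero.1 hk), one_pow]
    ring

/-! ### `PiLp` machinery -/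

noncomputable def toE {n : ℕ} (p : ℝ) (g : (Fin n → Bool) → ℂ) :
    PiLp (ENNReal.ofReal p) (fun _ : (Fin n → Bool) => ℂ) :=
  (WithLp.equiv (ENNReal.ofReal p) _).symm g

lemma norm_toE {p : ℝ} (hp1 : 1 ≤ p) (g : (Fin n → Bool) → ℂ) :
    ‖toE p g‖ = (∑ x : Fin n → Bool, ‖g x‖ ^ p) ^ (1/p) := by
  haveI : Fact (1 ≤ ENNReal.ofReal p) := ⟨ENNReal.one_le_ofReal.2 hp1⟩
  have htp : (ENNReal.ofReal p).toReal = p := ENNReal.toReal_ofReal (le_trans zero_le_one hp1)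
  rw [PiLp.norm_eq_sum (by rw [htp]; linarith : 0 < (ENNReal.ofReal p).toReal)]
  rw [htp]
  congr 1

lemma sum_smul_toE_apply {p : ℝ} {ι : Type*} (s : Finset ι) (r : ι → ℝ)
    (v : ι → (Fin n → Bool) → ℂ) (x : Fin n → Bool) :
    (∑ A ∈ s, r A • toE p (v A)) x = ∑ A ∈ s, (r A : ℂ) * v A x := by
  classical
  induction s using Finset.induction with
  | empty => rfl
  | insert _ _ h ih =>
    rw [Finset.sum_insert h, Finset.sum_insert h, ← ih]
    rfl

lemma smul_toE_apply {p r : ℝ} (g : (Fin n → Bool) → ℂ) (x : Fin n → Bool) :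
    (r • toE p g) x = (r : ℂ) * g x := by
  rw [show (r • toE p g) x = r • (g x) from rfl, Complex.real_smul]

end CubeAux

open DiscreteCube

/-- **Poincaré inequality for a partial set of coordinates.** For every `n ≥ 1`,
`1 ≤ p ≤ 2`, `𝒥 ⊆ {1,…,n}` and `f : Ω_n → ℂ`,
`‖𝒱_𝒥(f)‖_p ≤ (π/4) ‖ |∇_𝒥 f| ‖_p`. -/



theorem cube_partial_poincare_inequality (n : ℕ) (hn : 1 ≤ n) (p : ℝ)
    (hp1 : 1 ≤ p) (hp2 : p ≤ 2) (J : Finset (Fin n)) (f : (Fin n → Bool) → ℂ) :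
    cLp p (specPart J f) ≤ (π / 4) * rLp p (gradLenJ J f) := by
  classical
  open CubeAux in
  haveI : Fact (1 ≤ ENNReal.ofReal p) := ⟨ENNReal.one_le_ofReal.2 hp1⟩
  haveI : CompleteSpace (PiLp (ENNReal.ofReal p) (fun _ : (Fin n → Bool) => ℂ)) :=
    FiniteDimensional.complete ℝ _
  have hp0 : (0:ℝ) < p := lt_of_lt_of_le one_pos hp1
  have hgrad0 : ∀ x : Fin n → Bool, 0 ≤ gradLenJ J f x := fun x => Real.sqrt_nonneg _
  set Kp : ℝ := (∑ x : Fin n → Bool, gradLenJ J f x ^ p) ^ (1/p) with hKp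
  have hsum0 : (0:ℝ) ≤ ∑ x : Fin n → Bool, gradLenJ J f x ^ p :=
    Finset.sum_nonneg fun x _ => Real.rpow_nonneg (hgrad0 x) p
  have hKp0 : 0 ≤ Kp := Real.rpow_nonneg hsum0 _
  set φ : Finset (Fin n) → ℝ → ℝ := fun A θ =>
    ((A ∩ J).card : ℝ) * Real.cos θ ^ ((A ∩ J).card - 1) * Real.sin θ with hφ
  have hφcont : ∀ A, Continuous (φ A) := by
    intro A
    rw [hφ]
    continuity
  set v : Finset (Fin n) → (Fin n → Bool) → ℂ := fun A x => coeff f A * walsh A x with hv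
  set FE : ℝ → PiLp (ENNReal.ofReal p) (fun _ : (Fin n → Bool) => ℂ) := fun θ =>
    ∑ A : Finset (Fin n), φ A θ • toE p (v A) with hFE
  -- Step 1 : the spectral projection is the integral of FE
  have hintegrable : ∀ A : Finset (Fin n), A ∈ (Finset.univ : Finset (Finset (Fin n))) →
      IntervalIntegrable (fun θ => φ A θ • toE p (v A)) MeasureTheory.volume 0 (π/2) :=
    fun A _ => ((hφcont A).smul continuous_const).intervalIntegrable 0 (π/2)
  have hstep1 : toE p (specPart J f) = ∫ θ in (0:ℝ)..(π/2), FE θ := by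
    rw [hFE]
    rw [intervalIntegral.integral_finset_sum hintegrable]
    have : ∀ A : Finset (Fin n),
        (∫ θ in (0:ℝ)..(π/2), φ A θ • toE p (v A))
          = ((if (A ∩ J).card = 0 then (0:ℝ) else 1)) • toE p (v A) := by
      intro A
      rw [intervalIntegral.integral_smul_const, hφ, integral_phi]
    rw [Finset.sum_congr rfl fun A _ => this A]
    ext x
    rw [sum_smul_toE_apply]
    show specPart J f x = _
    rw [specPart, Finset.sum_filter]
    refine Finset.sum_congr rfl fun A _ => ?_
    by_cases hA : (A ∩ J).Nonempty
    · rw [if_pos hA, if_neg (by simpa [Finset.card_eq_zero, ← Finset.not_nonempty_iff_eq_empty]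
        using hA)]
      simp [hv]
    · rw [if_neg hA, if_pos (by rw [Finset.card_eq_zero,
        ← Finset.not_nonempty_iff_eq_empty]; exact hA)]
      simp
  -- Step 2 : pointwise norm bound on the integrand
  have hstep2 : ∀ θ ∈ Set.uIoc (0:ℝ) (π/2), ‖FE θ‖ ≤ Kp/2 := by
    intro θ hθ
    rw [Set.uIoc_of_le (by have := Real.pi_pos; linarith : (0:ℝ) ≤ π/2)] at hθ
    obtain ⟨hθ0, hθ1⟩ := hθ
    have hsin : 0 < Real.sin θ :=
      Real.sin_pos_of_pos_of_lt_pi hθ0 (lt_of_le_of_lt hθ1 (by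
        have := Real.pi_pos; linarith))
    have hcos0 : 0 ≤ Real.cos θ :=
      Real.cos_nonneg_of_mem_Icc ⟨by have := Real.pi_pos; linarith, hθ1⟩
    have hcos1 : Real.cos θ < 1 := by
      have := Real.cos_lt_cos_of_nonneg_of_le_pi (le_refl 0)
        (by have := Real.pi_pos; linarith : θ ≤ π) hθ0
      simpa using this
    have hcs : Real.cos θ ^ 2 + Real.sin θ ^ 2 = 1 := Real.cos_sq_add_sin_sq θ
    -- FE θ = (sin θ / 2) • toE p (Tmap J (cos θ) f)
    have hFEθ : FE θ = (Real.sin θ / 2) • toE p (Tmap J (Real.cos θ) f) := by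
      ext x
      show (∑ A : Finset (Fin n), φ A θ • toE p (v A)) x
        = ((Real.sin θ / 2) • toE p (Tmap J (Real.cos θ) f)) x
      rw [sum_smul_toE_apply, smul_toE_apply]
      rw [Tmap_linear J (Real.cos θ) f x]
      rw [Finset.mul_sum]
      refine Finset.sum_congr rfl fun A _ => ?_
      rw [Tmap_walsh hcos0 hcos1 J A x, hφ, hv]
      push_cast
      ring
    rw [hFEθ]
    rw [norm_smul, Real.norm_eq_abs, abs_of_nonneg (by positivity : (0:ℝ) ≤ Real.sin θ / 2)]
    rw [norm_toE hp1]
    have hkey := key_bound hcos0 hcos1 hsin hcs hp1 hp2 J f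
    have hmono : (∑ x : Fin n → Bool, ‖Tmap J (Real.cos θ) f x‖ ^ p) ^ (1/p)
        ≤ (∑ x : Fin n → Bool, ((Real.sin θ)⁻¹ * gradLenJ J f x) ^ p) ^ (1/p) :=
      Real.rpow_le_rpow (Finset.sum_nonneg fun x _ =>
        Real.rpow_nonneg (norm_nonneg _) p) hkey (by positivity)
    have hfactor : (∑ x : Fin n → Bool, ((Real.sin θ)⁻¹ * gradLenJ J f x) ^ p) ^ (1/p)
        = (Real.sin θ)⁻¹ * Kp := by
      have e1 : ∀ x : Fin n → Bool, ((Real.sin θ)⁻¹ * gradLenJ J f x) ^ p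
          = (Real.sin θ)⁻¹ ^ p * gradLenJ J f x ^ p := fun x =>
        Real.mul_rpow (inv_nonneg.2 hsin.le) (hgrad0 x)
      rw [Finset.sum_congr rfl fun x _ => e1 x, ← Finset.mul_sum]
      rw [Real.mul_rpow (Real.rpow_nonneg (inv_nonneg.2 hsin.le) p) hsum0]
      rw [← Real.rpow_mul (inv_nonneg.2 hsin.le), mul_one_div_cancel hp0.ne', Real.rpow_one]
    calc Real.sin θ / 2 * (∑ x : Fin n → Bool, ‖Tmap J (Real.cos θ) f x‖ ^ p) ^ (1/p)
        ≤ Real.sin θ / 2 * ((Real.sin θ)⁻¹ * Kp) := by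
          refine mul_le_mul_of_nonneg_left ?_ (by positivity)
          rw [← hfactor]
          exact hmono
      _ = Kp/2 := by
          field_simp
  -- Step 3 : Minkowski-type bound for the vector integral
  have hstep3 : ‖toE p (specPart J f)‖ ≤ Kp/2 * |π/2 - 0| := by
    rw [hstep1]
    exact intervalIntegral.norm_integral_le_of_norm_le_const hstep2
  rw [abs_of_nonneg (by have := Real.pi_pos; linarith : (0:ℝ) ≤ π/2 - 0)] at hstep3
  -- Step 4 : put the normalizations back
  have h2n : (0:ℝ) < (2:ℝ)^n := by positivity
  have hcLp : cLp p (specPart J f)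
      = (∑ x : Fin n → Bool, ‖specPart J f x‖ ^ p) ^ (1/p) / ((2:ℝ)^n) ^ (1/p) := by
    rw [cLp, Real.div_rpow (Finset.sum_nonneg fun x _ =>
      Real.rpow_nonneg (norm_nonneg _) p) h2n.le]
  have hrLp : rLp p (gradLenJ J f) = Kp / ((2:ℝ)^n) ^ (1/p) := by
    rw [rLp, Real.div_rpow (Finset.sum_nonneg fun x _ =>
      Real.rpow_nonneg (abs_nonneg _) p) h2n.le, hKp]
    congr 2
    exact Finset.sum_congr rfl fun x _ => by rw [abs_of_nonneg (hgrad0 x)]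
  rw [hcLp, hrLp]
  rw [← norm_toE hp1]
  rw [div_le_iff₀ (by positivity : (0:ℝ) < ((2:ℝ)^n) ^ (1/p))]
  calc ‖toE p (specPart J f)‖ ≤ Kp/2 * (π/2 - 0) := hstep3
    _ = π/4 * Kp := by ring
    _ = π / 4 * (Kp / ((2:ℝ)^n) ^ (1/p)) * ((2:ℝ)^n) ^ (1/p) := by
        field_simp
end
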